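/- For every derivation π of a sequent Γ ⊢ A in the extracted calculus TZ_{Σ_Lic}, there exists a morphism ⟦π⟧ : ⟦Γ⟧ → Out(A) in the architectural category Arch_{Ẑ} that belongs to the licensed diagram class Diag_Lic; moreover derivations ending in W_z are interpreted using the licensed discard family ω_{z,−} and derivations ending in C_z are interpreted using the licensed diagonal family δ_{z,−}. -/

import Mathlib

open CategoryTheory MonoidalCategory

universe v u

variable {Z At O : Type}
variable {A : Type u} [Category.{v} A] [MonoidalCategory A] [SymmetricCategory A]

/-- Tensorial formulas: atoms, the unit `I`, and tensor `⊗`. -/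
inductive Formula (At : Type) where
  | atom : At → Formula At
  | unit : Formula At
  | tensor : Formula At → Formula At → Formula At

/-- The semantic data of a coherently disciplined architecture over the extended
zone set `Ẑ = Z ⊔ {o}` (here `Option Z`, with `none` the fresh output zone `o`):
the one-zone embeddings `J`, the interpretation of atoms, products and terminal
object of `Ctx`, the zone preorder with its coercions, the licensed discards and
diagonals, and the canonical semantic interface blocks. -/
structure Discipline (Z At O : Type) (A : Type u) [Category.{v} A]
    [MonoidalCategory A] where
  J : Option Z → O → A
  rho : At → O
  pO : O → O → O
  oneO : O
  le : Z → Z → Prop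
  W : Set Z
  Cz : Set Z
  chi : ∀ {z z' : Z}, le z z' → ∀ X : O, J (some z) X ⟶ J (some z') X
  omega : ∀ {z : Z}, z ∈ W → ∀ X : O, J (some z) X ⟶ 𝟙_ A
  delta : ∀ {z : Z}, z ∈ Cz → ∀ X : O, J (some z) X ⟶ J (some z) X ⊗ J (some z) X
  readout : ∀ (z : Z) (X : O), J (some z) X ⟶ J none X
  input : ∀ (z : Z) (X : O), J none X ⟶ J (some z) X
  tauOut : ∀ X Y : O, J none X ⊗ J none Y ⟶ J none (pO X Y)
  muDec : ∀ (z : Z) (X Y : O), J (some z) (pO X Y) ⟶ J (some z) X ⊗ J (some z) Y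
  etaOut : 𝟙_ A ⟶ J none oneO
  nuDis : ∀ z : Z, J (some z) oneO ⟶ 𝟙_ A

variable (D : Discipline Z At O A)

/-- Interpretation of formulas: `⟦p⟧ = ρ(p)`, `⟦I⟧ = 1`, `⟦A⊗B⟧ = ⟦A⟧ × ⟦B⟧`. -/
def semF : Formula At → O
  | Formula.atom p => D.rho p
  | Formula.unit => D.oneO
  | Formula.tensor F G => D.pO (semF F) (semF G)

/-- Interpretation of a zone context as the tensor of the `J_{zᵢ}(⟦Aᵢ⟧)`. -/
def interpCtx : List (Z × Formula At) → A
  | [] => 𝟙_ A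
  | (z, F) :: Γ => D.J (some z) (semF D F) ⊗ interpCtx Γ

/-- The output object `Out(A) = J_o(⟦A⟧)`. -/
def Out (F : Formula At) : A := D.J none (semF D F)

/-- The licensed diagram class `Diag_Lic`: the smallest class of morphisms of
`Arch_{Ẑ}` containing identities and the monoidal structural isomorphisms, the
canonical interface blocks, the licensed coercions, discards and diagonals, and
closed under composition and tensor product. -/
inductive Diag : ∀ {X Y : A}, (X ⟶ Y) → Prop where
  | id (X : A) : Diag (𝟙 X)
  | assocHom (X Y Z' : A) : Diag (α_ X Y Z').hom
  | assocInv (X Y Z' : A) : Diag (α_ X Y Z').inv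
  | leftUnitorHom (X : A) : Diag (λ_ X).hom
  | leftUnitorInv (X : A) : Diag (λ_ X).inv
  | rightUnitorHom (X : A) : Diag (ρ_ X).hom
  | rightUnitorInv (X : A) : Diag (ρ_ X).inv
  | braiding (X Y : A) : Diag (β_ X Y).hom
  | readout (z X) : Diag (D.readout z X)
  | input (z X) : Diag (D.input z X)
  | tauOut (X Y) : Diag (D.tauOut X Y)
  | muDec (z X Y) : Diag (D.muDec z X Y)
  | etaOut : Diag D.etaOut
  | nuDis (z) : Diag (D.nuDis z)
  | chi {z z'} (h : D.le z z') (X) : Diag (D.chi h X)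
  | omega {z} (h : z ∈ D.W) (X) : Diag (D.omega h X)
  | delta {z} (h : z ∈ D.Cz) (X) : Diag (D.delta h X)
  | comp {X Y Z' : A} {f : X ⟶ Y} {g : Y ⟶ Z'} : Diag f → Diag g → Diag (f ≫ g)
  | tensor {X X' Y Y' : A} {f : X ⟶ Y} {g : X' ⟶ Y'} :
      Diag f → Diag g → Diag (f ⊗ₘ g)

/-- The extracted calculus `TZ_{Σ_Lic}` on list contexts, with an explicit
exchange rule (contexts are multisets up to permutation). -/
inductive DerivL (W C : Set Z) : List (Z × Formula At) → Formula At → Prop where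
  | exch {Γ Γ' F} : Γ.Perm Γ' → DerivL W C Γ F → DerivL W C Γ' F
  | ax (z F) : DerivL W C [(z, F)] F
  | unitR : DerivL W C [] Formula.unit
  | unitL {Γ z F} : DerivL W C Γ F → DerivL W C ((z, Formula.unit) :: Γ) F
  | tensorR {Γ Δ F G} : DerivL W C Γ F → DerivL W C Δ G →
      DerivL W C (Γ ++ Δ) (Formula.tensor F G)
  | tensorL {Γ z F G H} : DerivL W C ((z, F) :: (z, G) :: Γ) H →
      DerivL W C ((z, Formula.tensor F G) :: Γ) H
  | cut {Γ Δ z F G} : DerivL W C Γ F → DerivL W C ((z, F) :: Δ) G →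
      DerivL W C (Γ ++ Δ) G
  | weak {Γ z F G} : z ∈ W → DerivL W C Γ G → DerivL W C ((z, F) :: Γ) G
  | contr {Γ z F G} : z ∈ C → DerivL W C ((z, F) :: (z, F) :: Γ) G →
      DerivL W C ((z, F) :: Γ) G

lemma permHom : ∀ {Γ Γ' : List (Z × Formula At)}, Γ.Perm Γ' →
    ∃ f : interpCtx D Γ ⟶ interpCtx D Γ', Diag D f := by
  intro Γ Γ' hp
  induction hp with
  | nil => exact ⟨𝟙 _, Diag.id _⟩
  | cons x _ ih =>
      obtain ⟨f, hf⟩ := ih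
      exact ⟨𝟙 _ ⊗ₘ f, Diag.tensor (Diag.id _) hf⟩
  | swap x y l =>
      exact ⟨(α_ _ _ _).inv ≫ ((β_ _ _).hom ⊗ₘ 𝟙 _) ≫ (α_ _ _ _).hom,
        Diag.comp (Diag.assocInv _ _ _)
          (Diag.comp (Diag.tensor (Diag.braiding _ _) (Diag.id _)) (Diag.assocHom _ _ _))⟩
  | trans _ _ ih1 ih2 =>
      obtain ⟨f, hf⟩ := ih1; obtain ⟨g, hg⟩ := ih2
      exact ⟨f ≫ g, Diag.comp hf hg⟩

lemma splitHom : ∀ (Γ Δ : List (Z × Formula At)),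
    ∃ f : interpCtx D (Γ ++ Δ) ⟶ interpCtx D Γ ⊗ interpCtx D Δ, Diag D f := by
  intro Γ Δ
  induction Γ with
  | nil => exact ⟨(λ_ _).inv, Diag.leftUnitorInv _⟩
  | cons p Γ' ih =>
      obtain ⟨f, hf⟩ := ih
      exact ⟨(𝟙 _ ⊗ₘ f) ≫ (α_ _ _ _).inv,
        Diag.comp (Diag.tensor (Diag.id _) hf) (Diag.assocInv _ _ _)⟩

/-- soundness of the extracted calculus: every derivation of
`Γ ⊢ A` in `TZ_{Σ_Lic}` is interpreted by a morphism `⟦Γ⟧ ⟶ Out(A)` lying in the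
licensed diagram class `Diag_Lic`; moreover weakening steps `W_z` are interpreted
using the licensed discard family `ω_{z,-}` and contraction steps `C_z` using the
licensed diagonal family `δ_{z,-}`: whenever the premise of such a step has an
interpretation in `Diag_Lic`, the canonical interpretation of its conclusion built
from `ω_{z,-}` (resp. `δ_{z,-}`) again lies in `Diag_Lic`. -/
theorem soundness :
    (∀ (Γ : List (Z × Formula At)) (F : Formula At),
      DerivL D.W D.Cz Γ F → ∃ h : interpCtx D Γ ⟶ Out D F, Diag D h) ∧
    (∀ (z : Z) (hz : z ∈ D.W) (FA FB : Formula At) (Γ : List (Z × Formula At))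
      (s : interpCtx D Γ ⟶ Out D FB), Diag D s →
      Diag D ((D.omega hz (semF D FA) ⊗ₘ 𝟙 (interpCtx D Γ)) ≫
        (λ_ (interpCtx D Γ)).hom ≫ s :
          interpCtx D ((z, FA) :: Γ) ⟶ Out D FB)) ∧
    (∀ (z : Z) (hz : z ∈ D.Cz) (FA FB : Formula At) (Γ : List (Z × Formula At))
      (s : interpCtx D ((z, FA) :: (z, FA) :: Γ) ⟶ Out D FB), Diag D s →
      Diag D ((D.delta hz (semF D FA) ⊗ₘ 𝟙 (interpCtx D Γ)) ≫
        (α_ (D.J (some z) (semF D FA)) (D.J (some z) (semF D FA))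
          (interpCtx D Γ)).hom ≫ s :
          interpCtx D ((z, FA) :: Γ) ⟶ Out D FB)) := by
  refine ⟨?_, ?_, ?_⟩
  · intro Γ F hd
    induction hd with
    | exch hp _ ih =>
        obtain ⟨f, hf⟩ := ih
        obtain ⟨g, hg⟩ := permHom D hp.symm
        exact ⟨g ≫ f, Diag.comp hg hf⟩
    | ax z F =>
        exact ⟨(ρ_ _).hom ≫ D.readout z _,
          Diag.comp (Diag.rightUnitorHom _) (Diag.readout _ _)⟩
    | unitR => exact ⟨D.etaOut, Diag.etaOut⟩
    | unitL _ ih =>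
        obtain ⟨f, hf⟩ := ih
        exact ⟨(D.nuDis _ ⊗ₘ 𝟙 _) ≫ (λ_ _).hom ≫ f,
          Diag.comp (Diag.tensor (Diag.nuDis _) (Diag.id _))
            (Diag.comp (Diag.leftUnitorHom _) hf)⟩
    | tensorR _ _ ih1 ih2 =>
        obtain ⟨f, hf⟩ := ih1; obtain ⟨g, hg⟩ := ih2
        obtain ⟨s, hs⟩ := splitHom D _ _
        exact ⟨s ≫ (f ⊗ₘ g) ≫ D.tauOut _ _,
          Diag.comp hs (Diag.comp (Diag.tensor hf hg) (Diag.tauOut _ _))⟩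
    | tensorL _ ih =>
        obtain ⟨f, hf⟩ := ih
        exact ⟨(D.muDec _ _ _ ⊗ₘ 𝟙 _) ≫ (α_ _ _ _).hom ≫ f,
          Diag.comp (Diag.tensor (Diag.muDec _ _ _) (Diag.id _))
            (Diag.comp (Diag.assocHom _ _ _) hf)⟩
    | @cut Γ' Δ z F' G _ _ ih1 ih2 =>
        obtain ⟨f, hf⟩ := ih1; obtain ⟨g, hg⟩ := ih2
        obtain ⟨s, hs⟩ := splitHom D Γ' Δ
        exact ⟨s ≫ (f ⊗ₘ 𝟙 _) ≫ (D.input z _ ⊗ₘ 𝟙 _) ≫ g,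
          Diag.comp hs (Diag.comp (Diag.tensor hf (Diag.id _))
            (Diag.comp (Diag.tensor (Diag.input _ _) (Diag.id _)) hg))⟩
    | weak hz _ ih =>
        obtain ⟨f, hf⟩ := ih
        exact ⟨(D.omega hz _ ⊗ₘ 𝟙 _) ≫ (λ_ _).hom ≫ f,
          Diag.comp (Diag.tensor (Diag.omega hz _) (Diag.id _))
            (Diag.comp (Diag.leftUnitorHom _) hf)⟩
    | contr hz _ ih =>
        obtain ⟨f, hf⟩ := ih
        exact ⟨(D.delta hz _ ⊗ₘ 𝟙 _) ≫ (α_ _ _ _).hom ≫ f,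
          Diag.comp (Diag.tensor (Diag.delta hz _) (Diag.id _))
            (Diag.comp (Diag.assocHom _ _ _) hf)⟩
  · intro z hz FA FB Γ s hs
    exact Diag.comp (Diag.tensor (Diag.omega hz _) (Diag.id _))
      (Diag.comp (Diag.leftUnitorHom _) hs)
  · intro z hz FA FB Γ s hs
    exact Diag.comp (Diag.tensor (Diag.delta hz _) (Diag.id _))
      (Diag.comp (Diag.assocHom _ _ _) hs)
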